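/- If a graph G has a fibration φ: G → B onto its minimal base B, then for node dynamics governed by a graph convolution layer h_u' = F(Σ_{w ∈ N(−,u)} c · h_w · W) with features constant on fibers, the dynamics on G projects exactly onto the corresponding dynamics on B: the new feature of any node u in G equals the new feature of φ(u) computed on B with edge multiplicities of the base. -/

import Mathlib

/-- A finite directed multigraph: a node type, an edge type, and source/target maps. -/
structure FinDigraph where
  V : Type
  E : Type
  [finV : Finite V]
  [finE : Finite E]
  src : E → V
  tgt : E → V

attribute [instance] FinDigraph.finV FinDigraph.finE

namespace FinDigraph

/-- The far endpoint of a (reversed) path ending at `u`: the list `[e_k, …, e_1]`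
represents the directed path `src e_k → ⋯ → tgt e_1 = u`. -/
def farEnd (G : FinDigraph) (u : G.V) : List G.E → G.V
  | [] => u
  | e :: _ => G.src e

/-- `l = [e_k, …, e_1]` is a directed path of `G` ending at `u`. -/
def IsInPath (G : FinDigraph) (u : G.V) : List G.E → Prop
  | [] => True
  | e :: es => IsInPath G u es ∧ G.tgt e = G.farEnd u es

/-- The nodes of the input tree of `u`: all directed paths ending at `u`. -/
def InPath (G : FinDigraph) (u : G.V) : Type := {l : List G.E // G.IsInPath u l}

/-- The root of the input tree of `u` (the empty path). -/
def root (G : FinDigraph) (u : G.V) : G.InPath u := ⟨[], trivial⟩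

/-- The parent of a path in the input tree (drop the farthest edge); the root is its own parent. -/
def parent (G : FinDigraph) (u : G.V) : G.InPath u → G.InPath u
  | ⟨[], h⟩ => ⟨[], h⟩
  | ⟨_ :: es, h⟩ => ⟨es, h.1⟩

/-- Isomorphism of input trees: a bijection of paths preserving root, depth and parent. -/
def InTreeIso (G : FinDigraph) (u : G.V) (H : FinDigraph) (v : H.V) : Prop :=
  ∃ F : G.InPath u ≃ H.InPath v,
    F (G.root u) = H.root v ∧
    (∀ p, ((F p).1).length = (p.1).length) ∧
    (∀ p, F (G.parent u p) = H.parent v (F p))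

/-- The reverse graph (all edges flipped). -/
def rev (G : FinDigraph) : FinDigraph :=
  { V := G.V, E := G.E, src := G.tgt, tgt := G.src }

/-- Isomorphism of output trees = isomorphism of input trees in the reverse graphs. -/
def OutTreeIso (G : FinDigraph) (u : G.V) (H : FinDigraph) (v : H.V) : Prop :=
  InTreeIso (rev G) u (rev H) v

/-- A homomorphism of directed multigraphs. -/
structure Hom (G H : FinDigraph) where
  onV : G.V → H.V
  onE : G.E → H.E
  map_src : ∀ e, H.src (onE e) = onV (G.src e)
  map_tgt : ∀ e, H.tgt (onE e) = onV (G.tgt e)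

/-- Isomorphism of directed multigraphs. -/
def IsIso (G H : FinDigraph) : Prop :=
  ∃ φ : Hom G H, Function.Bijective φ.onV ∧ Function.Bijective φ.onE

/-- Fibration equivalence of nodes: isomorphic input trees. -/
def fibEquiv (G : FinDigraph) (u v : G.V) : Prop := InTreeIso G u G v

/-- Covering equivalence of nodes: isomorphic input trees and isomorphic output trees. -/
def covEquiv (G : FinDigraph) (u v : G.V) : Prop :=
  InTreeIso G u G v ∧ OutTreeIso G u G v

/-- Orbit equivalence: some automorphism maps one node to the other. -/
def orbitEquiv (G : FinDigraph) (u v : G.V) : Prop :=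
  ∃ φ : Hom G G, Function.Bijective φ.onV ∧ Function.Bijective φ.onE ∧ φ.onV u = v

theorem inTreeIso_refl (G : FinDigraph) (u : G.V) : InTreeIso G u G u :=
  ⟨Equiv.refl _, rfl, fun _ => rfl, fun _ => rfl⟩

theorem inTreeIso_symm {G : FinDigraph} {u : G.V} {H : FinDigraph} {v : H.V}
    (h : InTreeIso G u H v) : InTreeIso H v G u := by
  obtain ⟨F, hroot, hlen, hpar⟩ := h
  refine ⟨F.symm, ?_, ?_, ?_⟩
  · rw [← hroot, Equiv.symm_apply_apply]
  · intro p; rw [← hlen (F.symm p), Equiv.apply_symm_apply]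
  · intro p
    apply F.injective
    rw [Equiv.apply_symm_apply, hpar (F.symm p), Equiv.apply_symm_apply]

theorem inTreeIso_trans {G : FinDigraph} {u : G.V} {H : FinDigraph} {v : H.V}
    {K : FinDigraph} {w : K.V}
    (h₁ : InTreeIso G u H v) (h₂ : InTreeIso H v K w) : InTreeIso G u K w := by
  obtain ⟨F, fr, fl, fp⟩ := h₁
  obtain ⟨F', gr, gl, gp⟩ := h₂
  refine ⟨F.trans F', ?_, ?_, ?_⟩
  · simp [Equiv.trans_apply, fr, gr]
  · intro p; simp [Equiv.trans_apply, gl, fl]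
  · intro p; simp [Equiv.trans_apply, fp, gp]

/-- The setoid of fibration equivalence (isomorphism of input trees). -/
def fibSetoid (G : FinDigraph) : Setoid G.V :=
  ⟨fibEquiv G, ⟨fun u => inTreeIso_refl G u, inTreeIso_symm, inTreeIso_trans⟩⟩

/-- The minimal fibration base of `G`: nodes are the fibers (input-tree isomorphism
classes), and the edges from a fiber `C'` into a fiber `C` are the edges of `G` from
nodes of `C'` into the chosen representative of `C`. -/
def base (G : FinDigraph) : FinDigraph where
  V := Quotient (fibSetoid G)
  E := {e : G.E // G.tgt e = (Quotient.mk (fibSetoid G) (G.tgt e)).out}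
  src e := Quotient.mk (fibSetoid G) (G.src e.1)
  tgt e := Quotient.mk (fibSetoid G) (G.tgt e.1)

/-- The fiber of a node, as a node of the minimal base. -/
def fibClass (G : FinDigraph) (u : G.V) : (base G).V := Quotient.mk (fibSetoid G) u

/-- A partition (given as an equivalence relation) is balanced if any two equivalent
nodes receive the same number of edges from each class. -/
def IsBalanced (G : FinDigraph) (r : G.V → G.V → Prop) : Prop :=
  Equivalence r ∧ ∀ u v, r u v → ∀ w : G.V,
    Nat.card {e : G.E // G.tgt e = u ∧ r (G.src e) w} =
    Nat.card {e : G.E // G.tgt e = v ∧ r (G.src e) w}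

/-- The multiset of states of the in-neighbors of `u` (with edge multiplicity). -/
noncomputable def inStates (G : FinDigraph) {S : Type} (x : G.V → S) (u : G.V) :
    Multiset S :=
  letI := Fintype.ofFinite G.E
  letI := Classical.decEq G.V
  (Finset.univ.filter (fun e => G.tgt e = u)).val.map fun e => x (G.src e)

end FinDigraph

/-- One graph convolution layer: the new feature of `u` is
`F (Σ_{e : in-edge of u} c • W (h (src e)))`. -/
noncomputable def FinDigraph.gcUpdate (G : FinDigraph) {m m' : ℕ} (c : ℝ)
    (W : (Fin m → ℝ) →ₗ[ℝ] (Fin m' → ℝ)) (F : (Fin m' → ℝ) → (Fin m' → ℝ))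
    (h : G.V → (Fin m → ℝ)) (u : G.V) : Fin m' → ℝ :=
  letI := Fintype.ofFinite G.E
  letI := Classical.decEq G.V
  F (∑ e ∈ Finset.univ.filter (fun e => G.tgt e = u), c • W (h (G.src e)))

namespace FinDigraph

variable {G : FinDigraph}

theorem farEnd_append (u : G.V) (e : G.E) (l : List G.E) :
    G.farEnd u (l ++ [e]) = G.farEnd (G.src e) l := by
  cases l <;> rfl

theorem isInPath_append {u : G.V} {e : G.E} (he : G.tgt e = u) (l : List G.E) :
    G.IsInPath u (l ++ [e]) ↔ G.IsInPath (G.src e) l := by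
  induction l with
  | nil => simp [IsInPath, farEnd, he]
  | cons a l ih =>
      show G.IsInPath u (l ++ [e]) ∧ G.tgt a = G.farEnd u (l ++ [e]) ↔
        G.IsInPath (G.src e) l ∧ G.tgt a = G.farEnd (G.src e) l
      rw [farEnd_append]
      exact and_congr ih Iff.rfl

theorem parent_val (u : G.V) (p : G.InPath u) : (G.parent u p).1 = p.1.tail := by
  obtain ⟨l, hl⟩ := p; cases l <;> rfl

theorem parent_iter_val (u : G.V) (k : ℕ) (p : G.InPath u) :
    ((G.parent u)^[k] p).1 = p.1.drop k := by
  induction k with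
  | zero => rfl
  | succ k ih => rw [Function.iterate_succ_apply', parent_val, ih, List.tail_drop]

theorem exists_match {u v : G.V} (F : G.InPath u ≃ G.InPath v)
    (hlen : ∀ p, ((F p).1).length = p.1.length) {e : G.E} (he : G.tgt e = u) :
    ∃ f : G.E, ∃ _ : G.tgt f = v, (F ⟨[e], ⟨trivial, he⟩⟩).1 = [f] := by
  have h1 : ((F ⟨[e], ⟨trivial, he⟩⟩).1).length = 1 := hlen _
  rcases hFe : F ⟨[e], ⟨trivial, he⟩⟩ with ⟨l, hl⟩
  rw [hFe] at h1
  simp only at h1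
  match l, h1, hl with
  | [a], _, hl =>
      exact ⟨a, hl.2, rfl⟩

theorem push_aux {u v : G.V} (F : G.InPath u ≃ G.InPath v)
    (hlen : ∀ p, ((F p).1).length = p.1.length)
    (hpar : ∀ p, F (G.parent u p) = G.parent v (F p))
    {e f : G.E} (he : G.tgt e = u) (hf : G.tgt f = v)
    (hef : (F ⟨[e], ⟨trivial, he⟩⟩).1 = [f]) :
    ∃ g : G.InPath (G.src e) → G.InPath (G.src f),
      (∀ (q : G.InPath u) (p : G.InPath (G.src e)),
        q.1 = p.1 ++ [e] → (F q).1 = (g p).1 ++ [f]) ∧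
      (∀ p, ((g p).1).length = p.1.length) := by
  set Q : G.InPath (G.src e) → G.InPath u :=
    fun p => ⟨p.1 ++ [e], (isInPath_append he p.1).mpr p.2⟩ with hQdef
  have key : ∀ p : G.InPath (G.src e), (F (Q p)).1.drop p.1.length = [f] := by
    intro p
    have h2 : Function.Semiconj F (G.parent u) (G.parent v) := hpar
    have h3 : F ((G.parent u)^[p.1.length] (Q p)) = (G.parent v)^[p.1.length] (F (Q p)) :=
      (h2.iterate_right p.1.length) (Q p)
    have h4 : (G.parent u)^[p.1.length] (Q p) = ⟨[e], ⟨trivial, he⟩⟩ := by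
      apply Subtype.ext
      rw [parent_iter_val]
      exact List.drop_left
    rw [← parent_iter_val v p.1.length (F (Q p)), ← h3, h4, hef]
  have klen : ∀ p : G.InPath (G.src e), (F (Q p)).1.length = p.1.length + 1 := by
    intro p; rw [hlen]; simp [hQdef]
  have ksplit : ∀ p : G.InPath (G.src e),
      (F (Q p)).1 = (F (Q p)).1.take p.1.length ++ [f] := by
    intro p
    conv_lhs => rw [← List.take_append_drop p.1.length (F (Q p)).1]
    rw [key p]
  have kmem : ∀ p : G.InPath (G.src e), G.IsInPath (G.src f) ((F (Q p)).1.take p.1.length) := by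
    intro p
    have h5 := (F (Q p)).2
    rw [ksplit p] at h5
    exact (isInPath_append hf _).mp h5
  refine ⟨fun p => ⟨(F (Q p)).1.take p.1.length, kmem p⟩, ?_, ?_⟩
  · intro q p hq
    have : q = Q p := Subtype.ext hq
    rw [this]
    exact ksplit p
  · intro p
    simp only [List.length_take]
    rw [klen p]
    omega

theorem inTreeIso_of_edge {u v : G.V} (F : G.InPath u ≃ G.InPath v)
    (hlen : ∀ p, ((F p).1).length = p.1.length)
    (hpar : ∀ p, F (G.parent u p) = G.parent v (F p))
    {e f : G.E} (he : G.tgt e = u) (hf : G.tgt f = v)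
    (hef : (F ⟨[e], ⟨trivial, he⟩⟩).1 = [f]) :
    InTreeIso G (G.src e) G (G.src f) := by
  have hlen' : ∀ p, ((F.symm p).1).length = p.1.length := fun p => by
    rw [← hlen (F.symm p), Equiv.apply_symm_apply]
  have hpar' : ∀ p, F.symm (G.parent v p) = G.parent u (F.symm p) := fun p =>
    F.injective (by rw [Equiv.apply_symm_apply, hpar, Equiv.apply_symm_apply])
  have hfe : (F.symm ⟨[f], ⟨trivial, hf⟩⟩).1 = [e] := by
    have h0 : F ⟨[e], ⟨trivial, he⟩⟩ = ⟨[f], ⟨trivial, hf⟩⟩ := Subtype.ext hef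
    rw [← h0]; exact congrArg Subtype.val (F.symm_apply_apply _)
  obtain ⟨g, hg, hglen⟩ := push_aux F hlen hpar he hf hef
  obtain ⟨g', hg', hg'len⟩ := push_aux F.symm hlen' hpar' hf he hfe
  have hQ : ∀ p : G.InPath (G.src e), G.IsInPath u (p.1 ++ [e]) :=
    fun p => (isInPath_append he p.1).mpr p.2
  have hQ' : ∀ p : G.InPath (G.src f), G.IsInPath v (p.1 ++ [f]) :=
    fun p => (isInPath_append hf p.1).mpr p.2
  have hgg' : ∀ p, g' (g p) = p := by
    intro p
    have h1 : (F ⟨p.1 ++ [e], hQ p⟩).1 = (g p).1 ++ [f] := hg _ p rfl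
    have h2 : F.symm ⟨(g p).1 ++ [f], hQ' (g p)⟩ = ⟨p.1 ++ [e], hQ p⟩ := by
      apply F.injective
      refine (F.apply_symm_apply _).trans ?_
      exact (Subtype.ext h1).symm
    have h3 : (F.symm ⟨(g p).1 ++ [f], hQ' (g p)⟩).1 = (g' (g p)).1 ++ [e] := hg' _ (g p) rfl
    rw [h2] at h3
    exact Subtype.ext (List.append_cancel_right h3).symm
  have hg'g : ∀ p, g (g' p) = p := by
    intro p
    have h1 : (F.symm ⟨p.1 ++ [f], hQ' p⟩).1 = (g' p).1 ++ [e] := hg' _ p rfl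
    have h2 : F ⟨(g' p).1 ++ [e], hQ (g' p)⟩ = ⟨p.1 ++ [f], hQ' p⟩ := by
      apply F.symm.injective
      refine (F.symm_apply_apply _).trans ?_
      exact (Subtype.ext h1).symm
    have h3 : (F ⟨(g' p).1 ++ [e], hQ (g' p)⟩).1 = (g (g' p)).1 ++ [f] := hg _ (g' p) rfl
    rw [h2] at h3
    exact Subtype.ext (List.append_cancel_right h3).symm
  refine ⟨⟨g, g', hgg', hg'g⟩, ?_, hglen, ?_⟩
  · -- root
    apply Subtype.ext
    have h1 : ((g (G.root (G.src e))).1).length = 0 := hglen _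
    exact List.eq_nil_of_length_eq_zero h1
  · -- parent
    intro p
    show g (G.parent _ p) = G.parent _ (g p)
    obtain ⟨l, hl⟩ := p
    cases l with
    | nil =>
        have hroot : G.parent (G.src e) ⟨[], hl⟩ = ⟨[], hl⟩ := rfl
        rw [hroot]
        have h1 : ((g ⟨[], hl⟩).1).length = 0 := hglen _
        have h2 : (g ⟨[], hl⟩).1 = [] := List.eq_nil_of_length_eq_zero h1
        apply Subtype.ext
        rw [parent_val, h2]
        rfl
    | cons a l' =>
        have hpp : G.parent (G.src e) ⟨a :: l', hl⟩ = ⟨l', hl.1⟩ := rfl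
        rw [hpp]
        apply Subtype.ext
        have h1 : (F ⟨l' ++ [e], hQ ⟨l', hl.1⟩⟩).1 = (g ⟨l', hl.1⟩).1 ++ [f] :=
          hg _ ⟨l', hl.1⟩ rfl
        have h2 : (F ⟨(a :: l') ++ [e], hQ ⟨a :: l', hl⟩⟩).1 = (g ⟨a :: l', hl⟩).1 ++ [f] :=
          hg _ ⟨a :: l', hl⟩ rfl
        have h3 : (⟨l' ++ [e], hQ ⟨l', hl.1⟩⟩ : G.InPath u) =
            G.parent u ⟨(a :: l') ++ [e], hQ ⟨a :: l', hl⟩⟩ := by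
          apply Subtype.ext
          refine Eq.trans ?_ (parent_val u _).symm
          rfl
        have h4 : (g ⟨l', hl.1⟩).1 ++ [f] = ((g ⟨a :: l', hl⟩).1 ++ [f]).tail := by
          rw [← h2, ← parent_val]
          exact h1.symm.trans (congrArg Subtype.val ((congrArg F h3).trans (hpar _)))
        obtain ⟨b, m, hm⟩ : ∃ b m, (g ⟨a :: l', hl⟩).1 = b :: m := by
          have := hglen ⟨a :: l', hl⟩
          cases hc : (g ⟨a :: l', hl⟩).1 with
          | nil => rw [hc] at this; simp at this
          | cons b m => exact ⟨b, m, rfl⟩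
        rw [hm] at h4
        simp only [List.cons_append, List.tail_cons] at h4
        rw [parent_val, hm]
        simp only [List.tail_cons]
        exact List.append_cancel_right h4

theorem inEdges_equiv {u v : G.V} (huv : G.fibEquiv u v) :
    ∃ σ : {e : G.E // G.tgt e = u} ≃ {e : G.E // G.tgt e = v},
      ∀ e : {e : G.E // G.tgt e = u}, G.fibEquiv (G.src e.1) (G.src (σ e).1) := by
  obtain ⟨F, -, hlen, hpar⟩ := huv
  have hlen' : ∀ p, ((F.symm p).1).length = p.1.length := fun p => by
    rw [← hlen (F.symm p), Equiv.apply_symm_apply]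
  choose σf hf1 hf2 using fun e : {e : G.E // G.tgt e = u} => exists_match F hlen e.2
  choose σg hg1 hg2 using fun e : {e : G.E // G.tgt e = v} => exists_match F.symm hlen' e.2
  have linv : ∀ e : {e : G.E // G.tgt e = u}, σg ⟨σf e, hf1 e⟩ = e.1 := by
    intro e
    have h1 : F ⟨[e.1], ⟨trivial, e.2⟩⟩ = ⟨[σf e], ⟨trivial, hf1 e⟩⟩ := Subtype.ext (hf2 e)
    have h2 := hg2 ⟨σf e, hf1 e⟩
    replace h2 := (congrArg Subtype.val ((congrArg F.symm h1).symm.trans (F.symm_apply_apply _))).symm.trans h2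
    simpa using h2.symm
  have rinv : ∀ e : {e : G.E // G.tgt e = v}, σf ⟨σg e, hg1 e⟩ = e.1 := by
    intro e
    have h1 : F.symm ⟨[e.1], ⟨trivial, e.2⟩⟩ = ⟨[σg e], ⟨trivial, hg1 e⟩⟩ := Subtype.ext (hg2 e)
    have h2 := hf2 ⟨σg e, hg1 e⟩
    replace h2 := (congrArg Subtype.val ((congrArg F h1).symm.trans (F.apply_symm_apply _))).symm.trans h2
    simpa using h2.symm
  refine ⟨⟨fun e => ⟨σf e, hf1 e⟩, fun e => ⟨σg e, hg1 e⟩,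
    fun e => Subtype.ext (linv e), fun e => Subtype.ext (rinv e)⟩, fun e => ?_⟩
  exact inTreeIso_of_edge F hlen hpar e.2 (hf1 e) (hf2 e)

theorem sum_inEdges_eq {u v : G.V} (huv : G.fibEquiv u v)
    {M : Type} [AddCommMonoid M] [Fintype G.E] [DecidableEq G.V] (g : G.V → M)
    (hgc : ∀ a b : G.V, G.fibEquiv a b → g a = g b) :
    ∑ e ∈ Finset.univ.filter (fun e => G.tgt e = u), g (G.src e) =
    ∑ e ∈ Finset.univ.filter (fun e => G.tgt e = v), g (G.src e) := by
  obtain ⟨σ, hσ⟩ := inEdges_equiv huv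
  classical
  rw [Finset.sum_subtype (p := fun e => G.tgt e = u) _ (by simp),
      Finset.sum_subtype (p := fun e => G.tgt e = v) _ (by simp)]
  exact Fintype.sum_equiv σ _ _ (fun e => hgc _ _ (hσ e))

end FinDigraph

/-- for features constant on fibers (`hB ∘ φ = h` where `φ` is the
fibration of `G` onto its minimal base), one graph convolution step on `G` projects
exactly onto the corresponding step on the base with its edge multiplicities. -/
theorem gc_projects_to_base (G : FinDigraph) (m m' : ℕ) (c : ℝ)
    (W : (Fin m → ℝ) →ₗ[ℝ] (Fin m' → ℝ)) (F : (Fin m' → ℝ) → (Fin m' → ℝ))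
    (h : G.V → (Fin m → ℝ)) (hB : (FinDigraph.base G).V → (Fin m → ℝ))
    (hconst : ∀ u : G.V, hB (FinDigraph.fibClass G u) = h u) :
    ∀ u : G.V,
      FinDigraph.gcUpdate G c W F h u =
      FinDigraph.gcUpdate (FinDigraph.base G) c W F hB (FinDigraph.fibClass G u) := by
  
  intro u
  letI : Fintype G.E := Fintype.ofFinite G.E
  letI : DecidableEq G.V := Classical.decEq G.V
  letI : Fintype (FinDigraph.base G).E := Fintype.ofFinite _
  letI : DecidableEq (FinDigraph.base G).V := Classical.decEq _
  simp only [FinDigraph.gcUpdate]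
  apply congrArg
  set v : G.V := (Quotient.mk (FinDigraph.fibSetoid G) u).out with hvdef
  have hv : Quotient.mk (FinDigraph.fibSetoid G) v = Quotient.mk (FinDigraph.fibSetoid G) u :=
    Quotient.out_eq _
  have huv : G.fibEquiv u v := Quotient.exact hv.symm
  have hgc : ∀ a b : G.V, G.fibEquiv a b →
      (fun w => c • W (h w)) a = (fun w => c • W (h w)) b := by
    intro a b hab
    simp only
    rw [← hconst a, ← hconst b]
    have : FinDigraph.fibClass G a = FinDigraph.fibClass G b := Quotient.sound hab
    rw [this]
  have key := @FinDigraph.sum_inEdges_eq G u v huv _ _ (Fintype.ofFinite G.E)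
    (Classical.decEq G.V) (fun w => c • W (h w)) hgc
  rw [key]
  have hmem : ∀ e : G.E, G.tgt e = v →
      G.tgt e = (Quotient.mk (FinDigraph.fibSetoid G) (G.tgt e)).out := by
    intro e he
    rw [he, hv]
  refine Finset.sum_bij'
    (fun (e : G.E) he => (⟨e, hmem e (Finset.mem_filter.mp he).2⟩ : (FinDigraph.base G).E))
    (fun (ε : (FinDigraph.base G).E) _ => ε.1) ?_ ?_ ?_ ?_ ?_
  · intro e he
    refine Finset.mem_filter.mpr ⟨Finset.mem_univ _, ?_⟩
    show Quotient.mk (FinDigraph.fibSetoid G) (G.tgt e) = FinDigraph.fibClass G u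
    rw [(Finset.mem_filter.mp he).2, hv]
    rfl
  · intro ε hε
    refine Finset.mem_filter.mpr ⟨Finset.mem_univ _, ?_⟩
    have h1 : Quotient.mk (FinDigraph.fibSetoid G) (G.tgt ε.1) = FinDigraph.fibClass G u :=
      (Finset.mem_filter.mp hε).2
    have h2 := ε.2
    rw [h1] at h2
    exact h2
  · intro e he; rfl
  · intro ε hε; rfl
  · intro e he
    show c • W (h (G.src e)) = c • W (hB (FinDigraph.fibClass G (G.src e)))
    rw [hconst]
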